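/- Let 𝒜 be an associative unital algebra over a field K, let q, λ ∈ K be nonzero, let η ∈ K, and let â, b̂, ĉ, d̂ ∈ 𝒜 satisfy the Fun_{q,λ}(GL(2)) relations: â*b̂ = q⁻¹λ⁻¹•(b̂*â), â*ĉ = q⁻¹λ•(ĉ*â), b̂*d̂ = q⁻¹λ•(d̂*b̂), ĉ*d̂ = q⁻¹λ⁻¹•(d̂*ĉ), â*d̂ − d̂*â = (q⁻¹−q)λ⁻¹•(b̂*ĉ), λ⁻¹•(b̂*ĉ) = λ•(ĉ*b̂). Define ã := â − η•ĉ, b̃ := b̂ + η•(â − d̂) − η^2•ĉ, c̃ := ĉ, d̃ := d̂ + η•ĉ, and D̃ := ã*d̃ − q⁻¹λ⁻¹•(b̃*c̃) − η(1 − q⁻¹λ⁻¹)•(ã*c̃). Then: (1) ã*b̃ − q⁻¹λ⁻¹•(b̃*ã) = η(1 − q⁻¹λ⁻¹)•(ã*ã − D̃); (2) ã*c̃ − q⁻¹λ•(c̃*ã) = −η(1 − q⁻¹λ)•(c̃*c̃); (3) b̃*d̃ − q⁻¹λ•(d̃*b̃) = −η(1 − q⁻¹λ)•(d̃*d̃ −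 D̃); (4) c̃*d̃ − q⁻¹λ⁻¹•(d̃*c̃) = η(1 − q⁻¹λ⁻¹)•(c̃*c̃); (5) ã*d̃ − d̃*ã = η(1 − q⁻¹λ⁻¹)•(ã*c̃) − η(qλ⁻¹ − 1)•(d̃*c̃) + (q⁻¹−q)λ⁻¹•(b̃*c̃); (6) λ⁻¹•(b̃*c̃) − λ•(c̃*b̃) = −η(q − λ⁻¹)•(ã*c̃) − η(q − λ)•(c̃*d̃). -/
import Mathlib


set_option maxHeartbeats 3200000 in
/-- Under the contraction change of basis `â = ã + ηc̃`, `b̂ = b̃ − η(ã−d̃) − η²c̃`, `ĉ = c̃`,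
`d̂ = d̃ − ηc̃`, the defining relations of `Fun_{q,λ}(GL(2))` become the transformed
relations listed in the conclusion, with transformed determinant
`D̃ = ãd̃ − q⁻¹λ⁻¹ b̃c̃ − η(1 − q⁻¹λ⁻¹) ãc̃`. -/
theorem contracted_Fun_q_lambda_relations {K : Type*} [Field K] {A : Type*} [Ring A]
    [Algebra K A] (q lam η : K) (hq : q ≠ 0) (hlam : lam ≠ 0) (a b c d ta tb tc td Dt : A)
    (hab : a * b = (q⁻¹ * lam⁻¹) • (b * a))
    (hac : a * c = (q⁻¹ * lam) • (c * a))
    (hbd : b * d = (q⁻¹ * lam) • (d * b))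
    (hcd : c * d = (q⁻¹ * lam⁻¹) • (d * c))
    (had : a * d - d * a = ((q⁻¹ - q) * lam⁻¹) • (b * c))
    (hbc : lam⁻¹ • (b * c) = lam • (c * b))
    (hta : ta = a - η • c)
    (htb : tb = b + η • (a - d) - η ^ 2 • c)
    (htc : tc = c)
    (htd : td = d + η • c)
    (hDt : Dt = ta * td - (q⁻¹ * lam⁻¹) • (tb * tc) - (η * (1 - q⁻¹ * lam⁻¹)) • (ta * tc)) :
    ta * tb - (q⁻¹ * lam⁻¹) • (tb * ta) = (η * (1 - q⁻¹ * lam⁻¹)) • (ta * ta - Dt) ∧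
    ta * tc - (q⁻¹ * lam) • (tc * ta) = (-(η * (1 - q⁻¹ * lam))) • (tc * tc) ∧
    tb * td - (q⁻¹ * lam) • (td * tb) = (-(η * (1 - q⁻¹ * lam))) • (td * td - Dt) ∧
    tc * td - (q⁻¹ * lam⁻¹) • (td * tc) = (η * (1 - q⁻¹ * lam⁻¹)) • (tc * tc) ∧
    ta * td - td * ta = (η * (1 - q⁻¹ * lam⁻¹)) • (ta * tc) - (η * (q * lam⁻¹ - 1)) • (td * tc)
      + ((q⁻¹ - q) * lam⁻¹) • (tb * tc) ∧
    lam⁻¹ • (tb * tc) - lam • (tc * tb) =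
      (-(η * (q - lam⁻¹))) • (ta * tc) - (η * (q - lam)) • (tc * td) := by
  have hbc' : b * c = (lam * lam) • (c * b) := by
    have := congrArg (fun x => lam • x) hbc
    simpa [smul_smul, hlam, mul_assoc] using this
  have had' : a * d = d * a + ((q⁻¹ - q) * lam⁻¹ * (lam * lam)) • (c * b) := by
    rw [← smul_smul, ← hbc']; linear_combination (norm := module) had
  subst hta htb htd hDt htc
  refine ⟨?_, ?_, ?_, ?_, ?_, ?_⟩ <;>
  · simp only [mul_add, add_mul, mul_sub, sub_mul, smul_mul_assoc, mul_smul_comm, smul_smul,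
      smul_sub, smul_add, hab, hac, hbd, hcd, had', hbc']
    match_scalars
    all_goals first
      | (ring_nf; field_simp; ring)
      | (ring_nf; field_simp)
      | ring_nf
      | ring
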